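/- arXiv:1804.04304 — 2 statements merged into one kernel-verified Lean document; each statement's English description precedes it below -/
import Mathlib

section
/- Let Ω ⊂⊂ ℂⁿ be a pseudoconvex domain with smooth boundary, and let Π be the set of all strongly pseudoconvex boundary points of Ω, i.e., the points p ∈ ∂Ω at which L_ρ(X,X)(p) > 0 for every nonzero X ∈ ℂⁿ with Σ_j X_j·(∂ρ/∂z_j)(p) = 0. Then for any defining function ρ of Ω and any η₂ ∈ (1,∞) there exists a neighborhood V of Π in ℂⁿ such that ρ^{η₂} is strictly plurisubharmonic on (ℂⁿ ∖ cl(Ω)) ∩ V. -/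
noncomputable section

open Complex Topology
open scoped ENNReal

/-- Wirtinger derivative `∂f/∂z_j`. -/
def dz {n : ℕ} (j : Fin n) (f : (Fin n → ℂ) → ℂ) (z : Fin n → ℂ) : ℂ :=
  (fderiv ℝ f z (Pi.single j 1) - Complex.I * fderiv ℝ f z (Pi.single j Complex.I)) / 2

/-- Wirtinger derivative `∂f/∂z̄_j`. -/
def dzbar {n : ℕ} (j : Fin n) (f : (Fin n → ℂ) → ℂ) (z : Fin n → ℂ) : ℂ :=
  (fderiv ℝ f z (Pi.single j 1) + Complex.I * fderiv ℝ f z (Pi.single j Complex.I)) / 2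

/-- Complexification of a real-valued function. -/
def cplx {n : ℕ} (ρ : (Fin n → ℂ) → ℝ) : (Fin n → ℂ) → ℂ := fun z => (ρ z : ℂ)

/-- The Levi form `L_ρ(X,Y)(z) = Σ_{j,k} ∂²ρ/∂z_j∂z̄_k (z) X_j conj(Y_k)`. -/
def levi {n : ℕ} (ρ : (Fin n → ℂ) → ℝ) (X Y : Fin n → ℂ) (z : Fin n → ℂ) : ℂ :=
  ∑ j, ∑ k, dz j (fun w => dzbar k (cplx ρ) w) z * X j * (starRingEnd ℂ) (Y k)

/-- `Xf = Σ_j X_j ∂f/∂z_j` for a (1,0) vector `X`. -/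
def dirDeriv {n : ℕ} (X : Fin n → ℂ) (f : (Fin n → ℂ) → ℂ) (z : Fin n → ℂ) : ℂ :=
  ∑ j, X j * dz j f z

/-- `X̄f = Σ_j conj(X_j) ∂f/∂z̄_j`. -/
def dirDerivBar {n : ℕ} (X : Fin n → ℂ) (f : (Fin n → ℂ) → ℂ) (z : Fin n → ℂ) : ℂ :=
  ∑ j, (starRingEnd ℂ) (X j) * dzbar j f z

/-- Derivative of `f` along the (1,0) vector field `X`. -/
def fieldDeriv {n : ℕ} (X : (Fin n → ℂ) → (Fin n → ℂ)) (f : (Fin n → ℂ) → ℂ)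
    (z : Fin n → ℂ) : ℂ :=
  dirDeriv (X z) f z

/-- Euclidean norm of the real gradient of `ρ`. -/
def gradNorm {n : ℕ} (ρ : (Fin n → ℂ) → ℝ) (z : Fin n → ℂ) : ℝ :=
  Real.sqrt (∑ j, ((fderiv ℝ ρ z (Pi.single j 1)) ^ 2 +
    (fderiv ℝ ρ z (Pi.single j Complex.I)) ^ 2))

/-- The complex normal field `N_ρ`. -/
def nfield {n : ℕ} (ρ : (Fin n → ℂ) → ℝ) (z : Fin n → ℂ) : Fin n → ℂ := fun j =>
  ((Real.sqrt (∑ k, Complex.normSq (dz k (cplx ρ) z)) : ℝ) : ℂ)⁻¹ * dzbar j (cplx ρ) z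

/-- Squared Euclidean norm of a vector in ℂⁿ. -/
def enormSq {n : ℕ} (X : Fin n → ℂ) : ℝ := ∑ j, Complex.normSq (X j)

/-- `f` is strictly plurisubharmonic on `S`. -/
def StrictPSHOn {n : ℕ} (f : (Fin n → ℂ) → ℝ) (S : Set (Fin n → ℂ)) : Prop :=
  ∀ z ∈ S, ∀ X : Fin n → ℂ, X ≠ 0 → 0 < (levi f X X z).re

/-- `ρ` is a (global smooth) defining function of `Ω` on the neighborhood `V` of `cl Ω`. -/
structure IsDefFn {n : ℕ} (Ω V : Set (Fin n → ℂ)) (ρ : (Fin n → ℂ) → ℝ) : Prop where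
  isOpen : IsOpen V
  subset : closure Ω ⊆ V
  smooth : ContDiffOn ℝ (⊤ : ℕ∞) ρ V
  eq : Ω = {z ∈ V | ρ z < 0}
  grad_ne : ∀ z ∈ frontier Ω, fderiv ℝ ρ z ≠ 0

/-- The Levi form of `ρ` is positive semidefinite on complex tangent vectors at `z`. -/
def LeviPseudoconvexAt {n : ℕ} (ρ : (Fin n → ℂ) → ℝ) (z : Fin n → ℂ) : Prop :=
  ∀ X : Fin n → ℂ, dirDeriv X (cplx ρ) z = 0 → 0 ≤ (levi ρ X X z).re

/-- `Ω` is a (smoothly bounded, Levi) pseudoconvex domain. -/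
def IsPseudoconvex {n : ℕ} (Ω : Set (Fin n → ℂ)) : Prop :=
  ∃ (V : Set (Fin n → ℂ)) (ρ : (Fin n → ℂ) → ℝ), IsDefFn Ω V ρ ∧
    ∀ p ∈ frontier Ω, LeviPseudoconvexAt ρ p

/-- The set of Steinness exponents of `ρ`. -/
def steinExpSet {n : ℕ} (Ω : Set (Fin n → ℂ)) (ρ : (Fin n → ℂ) → ℝ) : Set ℝ :=
  {η : ℝ | 1 < η ∧ ∃ W : Set (Fin n → ℂ), IsOpen W ∧ frontier Ω ⊆ W ∧
    StrictPSHOn (fun z => ρ z ^ η) ((closure Ω)ᶜ ∩ W)}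

/-- The Steinness exponent `η̃_ρ` of a defining function `ρ` (`∞` if none exists). -/
def steinExp {n : ℕ} (Ω : Set (Fin n → ℂ)) (ρ : (Fin n → ℂ) → ℝ) : ℝ≥0∞ :=
  sInf (ENNReal.ofReal '' steinExpSet Ω ρ)

/-- The Steinness index `S(Ω)`. -/
def steinIndex {n : ℕ} (Ω : Set (Fin n → ℂ)) : ℝ≥0∞ :=
  ⨅ (V : Set (Fin n → ℂ)) (ρ : (Fin n → ℂ) → ℝ) (_ : IsDefFn Ω V ρ), steinExp Ω ρ

/-- The set of Diederich–Fornæss exponents of `ρ`. -/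
def dfExpSet {n : ℕ} (Ω : Set (Fin n → ℂ)) (ρ : (Fin n → ℂ) → ℝ) : Set ℝ :=
  {η : ℝ | 0 < η ∧ η < 1 ∧ StrictPSHOn (fun z => -((-ρ z) ^ η)) Ω}

/-- The Diederich–Fornæss exponent of `ρ` (`0` if no exponent exists). -/
def dfExp {n : ℕ} (Ω : Set (Fin n → ℂ)) (ρ : (Fin n → ℂ) → ℝ) : ℝ :=
  sSup (insert 0 (dfExpSet Ω ρ))

/-- The Diederich–Fornæss index `DF(Ω)`. -/
def dfIndex {n : ℕ} (Ω : Set (Fin n → ℂ)) : ℝ :=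
  sSup {t : ℝ | ∃ V ρ, IsDefFn Ω V ρ ∧ t = dfExp Ω ρ}

/-- `L` is a smooth (1,0) tangent vector field for `ρ` on `A`. -/
def IsTangentField {n : ℕ} (ρ : (Fin n → ℂ) → ℝ) (L : (Fin n → ℂ) → (Fin n → ℂ))
    (A : Set (Fin n → ℂ)) : Prop :=
  ContDiffOn ℝ (⊤ : ℕ∞) L A ∧ ∀ z ∈ A, dirDeriv (L z) (cplx ρ) z = 0

/-- The key differential inequality
`(1/(η₂−1))|L_ρ(L,N)|²/‖∇ρ‖² − (1/2)(N L_ρ(L,L))/‖∇ρ‖ ≤ 0` at `p`. -/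
def keyIneqAt {n : ℕ} (ρ : (Fin n → ℂ) → ℝ) (L : (Fin n → ℂ) → (Fin n → ℂ)) (η₂ : ℝ)
    (p : Fin n → ℂ) : Prop :=
  1 / (η₂ - 1) * Complex.normSq (levi ρ (L p) (nfield ρ p) p) / (gradNorm ρ p) ^ 2 -
    1 / 2 * (fieldDeriv (nfield ρ) (fun w => levi ρ (L w) (L w) w) p).re / gradNorm ρ p ≤ 0

/-- The strict version of the key differential inequality. -/
def strictKeyIneqAt {n : ℕ} (ρ : (Fin n → ℂ) → ℝ) (L : (Fin n → ℂ) → (Fin n → ℂ)) (η₂ : ℝ)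
    (p : Fin n → ℂ) : Prop :=
  1 / (η₂ - 1) * Complex.normSq (levi ρ (L p) (nfield ρ p) p) / (gradNorm ρ p) ^ 2 -
    1 / 2 * (fieldDeriv (nfield ρ) (fun w => levi ρ (L w) (L w) w) p).re / gradNorm ρ p < 0

/-- `cl Ω` has a strong Stein neighborhood basis. -/
def HasStrongSteinBasis {n : ℕ} (Ω : Set (Fin n → ℂ)) : Prop :=
  ∃ (V : Set (Fin n → ℂ)) (ρ : (Fin n → ℂ) → ℝ), IsDefFn Ω V ρ ∧ ∃ ε₀ : ℝ, 0 < ε₀ ∧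
    (∀ z ∈ V, 0 ≤ ρ z → ρ z < ε₀ → fderiv ℝ ρ z ≠ 0) ∧
    ∀ ε : ℝ, 0 ≤ ε → ε < ε₀ → ∀ z ∈ V, ρ z = ε → LeviPseudoconvexAt ρ z

/-- Vanishing order at `0` of a holomorphic function `ℂ → ℂ` (`∞` if all derivatives vanish). -/
def orderC (h : ℂ → ℂ) : ℕ∞ :=
  sInf ((fun k : ℕ => (k : ℕ∞)) '' {k : ℕ | iteratedDeriv k h 0 ≠ 0})

/-- Vanishing order at `0` of a real-valued function on `ℂ`. -/
def orderR (g : ℂ → ℝ) : ℕ∞ :=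
  sInf ((fun k : ℕ => (k : ℕ∞)) '' {k : ℕ | iteratedFDeriv ℝ k g 0 ≠ 0})

/-- `ν(γ)`: minimal vanishing order at `0` of the components of `γ − p`. -/
def curveOrder {n : ℕ} (γ : ℂ → Fin n → ℂ) (p : Fin n → ℂ) : ℕ∞ :=
  ⨅ j, orderC (fun t => γ t j - p j)

/-- `p` is a boundary point of finite D'Angelo 1-type (w.r.t. the defining function `ρ`). -/
def FiniteTypePt {n : ℕ} (ρ : (Fin n → ℂ) → ℝ) (p : Fin n → ℂ) : Prop :=
  ∃ M : ℕ, ∀ γ : ℂ → Fin n → ℂ, (∀ j, AnalyticAt ℂ (fun t => γ t j) 0) → γ 0 = p →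
    ¬ (∀ᶠ t in nhds (0 : ℂ), γ t = p) →
    orderR (fun t => ρ (γ t)) ≤ (M : ℕ∞) * curveOrder γ p

variable {n : ℕ}

lemma fderiv_cplx {f : (Fin n → ℂ) → ℝ} {z : Fin n → ℂ} (hf : DifferentiableAt ℝ f z)
    (v : Fin n → ℂ) : fderiv ℝ (cplx f) z v = ((fderiv ℝ f z v : ℝ) : ℂ) := by
  have : HasFDerivAt (cplx f) (Complex.ofRealCLM.comp (fderiv ℝ f z)) z :=
    Complex.ofRealCLM.hasFDerivAt.comp z hf.hasFDerivAt
  rw [this.fderiv]; rfl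

lemma dzbar_conj {f : (Fin n → ℂ) → ℝ} {z : Fin n → ℂ} (hf : DifferentiableAt ℝ f z)
    (j : Fin n) : dzbar j (cplx f) z = (starRingEnd ℂ) (dz j (cplx f) z) := by
  unfold dz dzbar
  rw [fderiv_cplx hf, fderiv_cplx hf]
  simp [map_div₀, map_sub, map_mul, Complex.conj_ofReal, Complex.conj_I, map_ofNat]

lemma dzbar_cplx_smul {f g : (Fin n → ℂ) → ℝ} {z : Fin n → ℂ} {c : ℝ}
    (hg : DifferentiableAt ℝ g z) (hf : HasFDerivAt f (c • fderiv ℝ g z) z) (j : Fin n) :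
    dzbar j (cplx f) z = (c : ℂ) * dzbar j (cplx g) z := by
  have hfd : DifferentiableAt ℝ f z := hf.differentiableAt
  unfold dzbar
  rw [fderiv_cplx hfd, fderiv_cplx hfd, fderiv_cplx hg, fderiv_cplx hg, hf.fderiv]
  simp [ContinuousLinearMap.smul_apply, smul_eq_mul]
  ring

lemma dz_cplx_smul {f g : (Fin n → ℂ) → ℝ} {z : Fin n → ℂ} {c : ℝ}
    (hg : DifferentiableAt ℝ g z) (hf : HasFDerivAt f (c • fderiv ℝ g z) z) (j : Fin n) :
    dz j (cplx f) z = (c : ℂ) * dz j (cplx g) z := by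
  have hfd : DifferentiableAt ℝ f z := hf.differentiableAt
  unfold dz
  rw [fderiv_cplx hfd, fderiv_cplx hfd, fderiv_cplx hg, fderiv_cplx hg, hf.fderiv]
  simp [ContinuousLinearMap.smul_apply, smul_eq_mul]
  ring

lemma dz_mul {u v : (Fin n → ℂ) → ℂ} {z : Fin n → ℂ}
    (hu : DifferentiableAt ℝ u z) (hv : DifferentiableAt ℝ v z) (j : Fin n) :
    dz j (fun w => u w * v w) z = dz j u z * v z + u z * dz j v z := by
  unfold dz
  rw [fderiv_fun_mul hu hv]
  simp [ContinuousLinearMap.add_apply, ContinuousLinearMap.smul_apply, smul_eq_mul]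
  ring

lemma dz_congr {u v : (Fin n → ℂ) → ℂ} {z : Fin n → ℂ} (h : u =ᶠ[nhds z] v) (j : Fin n) :
    dz j u z = dz j v z := by
  unfold dz; rw [h.fderiv_eq]

variable {V : Set (Fin n → ℂ)} {ρ : (Fin n → ℂ) → ℝ}

lemma diffAt_of_mem (hV : IsOpen V) (hρ : ContDiffOn ℝ (⊤:ℕ∞) ρ V) {z : Fin n → ℂ}
    (hz : z ∈ V) : DifferentiableAt ℝ ρ z :=
  (hρ.contDiffAt (hV.mem_nhds hz)).differentiableAt (by simp)

lemma contDiffOn_dzbar (hV : IsOpen V) (hρ : ContDiffOn ℝ (⊤:ℕ∞) ρ V) (k : Fin n) :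
    ContDiffOn ℝ (⊤:ℕ∞) (fun z => dzbar k (cplx ρ) z) V := by
  have hF : ContDiffOn ℝ (⊤:ℕ∞) (fderiv ℝ ρ) V := hρ.fderiv_of_isOpen hV (by simp)
  have happ : ∀ v : Fin n → ℂ, ContDiffOn ℝ (⊤:ℕ∞) (fun z => ((fderiv ℝ ρ z v : ℝ) : ℂ)) V := by
    intro v
    exact (Complex.ofRealCLM.contDiff.comp
      ((ContinuousLinearMap.apply ℝ ℝ v).contDiff)).comp_contDiffOn hF
  have heq : Set.EqOn (fun z => dzbar k (cplx ρ) z)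
      (fun z => (((fderiv ℝ ρ z (Pi.single k 1) : ℝ) : ℂ) +
        Complex.I * ((fderiv ℝ ρ z (Pi.single k Complex.I) : ℝ) : ℂ)) / 2) V := by
    intro z hz
    unfold dzbar
    simp only [fderiv_cplx (diffAt_of_mem hV hρ hz)]
  exact ContDiffOn.congr (((happ _).add ((contDiffOn_const).mul (happ _))).div_const 2) heq

lemma continuousOn_A (hV : IsOpen V) (hρ : ContDiffOn ℝ (⊤:ℕ∞) ρ V) (j k : Fin n) :
    ContinuousOn (fun z => dz j (fun w => dzbar k (cplx ρ) w) z) V := by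
  have h := (contDiffOn_dzbar hV hρ k).continuousOn_fderiv_of_isOpen hV (by simp)
  unfold dz
  apply ContinuousOn.div_const
  exact (h.clm_apply continuousOn_const).sub
    (continuousOn_const.mul (h.clm_apply continuousOn_const))

lemma continuousOn_dzrho (hV : IsOpen V) (hρ : ContDiffOn ℝ (⊤:ℕ∞) ρ V) (j : Fin n) :
    ContinuousOn (fun z => dz j (cplx ρ) z) V := by
  have hF : ContinuousOn (fderiv ℝ ρ) V := hρ.continuousOn_fderiv_of_isOpen hV (by simp)
  have happ : ∀ v : Fin n → ℂ, ContinuousOn (fun z => ((fderiv ℝ ρ z v : ℝ) : ℂ)) V := fun v =>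
    Complex.continuous_ofReal.comp_continuousOn
      ((ContinuousLinearMap.apply ℝ ℝ v).continuous.comp_continuousOn hF)
  have heq : Set.EqOn (fun z => dz j (cplx ρ) z)
      (fun z => (((fderiv ℝ ρ z (Pi.single j 1) : ℝ) : ℂ) -
        Complex.I * ((fderiv ℝ ρ z (Pi.single j Complex.I) : ℝ) : ℂ)) / 2) V := by
    intro z hz
    unfold dz
    simp only [fderiv_cplx (diffAt_of_mem hV hρ hz)]
  exact ContinuousOn.congr (((happ _).sub (continuousOn_const.mul (happ _))).div_const 2) heq

lemma diffAt_dzbar (hV : IsOpen V) (hρ : ContDiffOn ℝ (⊤:ℕ∞) ρ V) (k : Fin n) {z : Fin n → ℂ}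
    (hz : z ∈ V) : DifferentiableAt ℝ (fun w => dzbar k (cplx ρ) w) z :=
  ((contDiffOn_dzbar hV hρ k).contDiffAt (hV.mem_nhds hz)).differentiableAt (by simp)

lemma levi_rpow (hV : IsOpen V) (hρ : ContDiffOn ℝ (⊤:ℕ∞) ρ V) (η : ℝ)
    {z : Fin n → ℂ} (hz : z ∈ V) (hρz : 0 < ρ z) (X : Fin n → ℂ) :
    (levi (fun w => ρ w ^ η) X X z).re =
      η * ρ z ^ (η - 2) *
        ((η - 1) * Complex.normSq (dirDeriv X (cplx ρ) z) + ρ z * (levi ρ X X z).re) := by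
  classical
  set U : Set (Fin n → ℂ) := V ∩ ρ ⁻¹' Set.Ioi 0 with hU
  have hUopen : IsOpen U := hρ.continuousOn.isOpen_inter_preimage hV isOpen_Ioi
  have hzU : z ∈ U := ⟨hz, hρz⟩
  -- derivative of ρ^η on U
  have hfd : ∀ w ∈ U, HasFDerivAt (fun w => ρ w ^ η)
      ((η * ρ w ^ (η - 1)) • fderiv ℝ ρ w) w := by
    intro w hw
    exact (Real.hasDerivAt_rpow_const (p := η) (Or.inl (ne_of_gt hw.2))).comp_hasFDerivAt w
      (diffAt_of_mem hV hρ hw.1).hasFDerivAt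
  -- dzbar of ρ^η on U
  have hbar : ∀ w ∈ U, ∀ k, dzbar k (cplx fun w => ρ w ^ η) w =
      ((η * ρ w ^ (η - 1) : ℝ) : ℂ) * dzbar k (cplx ρ) w := fun w hw k =>
    dzbar_cplx_smul (diffAt_of_mem hV hρ hw.1) (hfd w hw) k
  -- the scalar functions
  set c : (Fin n → ℂ) → ℝ := fun w => η * ρ w ^ (η - 1) with hc
  have hcd : HasFDerivAt c ((η * ((η - 1) * ρ z ^ (η - 1 - 1))) • fderiv ℝ ρ z) z := by
    have h1 : HasDerivAt (fun t : ℝ => η * t ^ (η - 1)) (η * ((η - 1) * ρ z ^ (η - 1 - 1)))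
        (ρ z) := (Real.hasDerivAt_rpow_const (p := η - 1) (Or.inl (ne_of_gt hρz))).const_mul η
    exact h1.comp_hasFDerivAt z (diffAt_of_mem hV hρ hz).hasFDerivAt
  have hcdiff : DifferentiableAt ℝ (fun w => ((c w : ℝ) : ℂ)) z :=
    Complex.ofRealCLM.differentiable.differentiableAt.comp z hcd.differentiableAt
  -- second derivative terms
  have hA : ∀ j k, dz j (fun w => dzbar k (cplx fun w => ρ w ^ η) w) z =
      ((η * ((η - 1) * ρ z ^ (η - 1 - 1)) : ℝ) : ℂ) * dz j (cplx ρ) z * dzbar k (cplx ρ) z +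
        ((c z : ℝ) : ℂ) * dz j (fun w => dzbar k (cplx ρ) w) z := by
    intro j k
    have hev : (fun w => dzbar k (cplx fun w => ρ w ^ η) w) =ᶠ[nhds z]
        (fun w => ((c w : ℝ) : ℂ) * dzbar k (cplx ρ) w) := by
      filter_upwards [hUopen.mem_nhds hzU] with w hw
      exact hbar w hw k
    rw [dz_congr hev j, dz_mul hcdiff (diffAt_dzbar hV hρ k hz) j]
    have hdzc : dz j (fun w => ((c w : ℝ) : ℂ)) z =
        ((η * ((η - 1) * ρ z ^ (η - 1 - 1)) : ℝ) : ℂ) * dz j (cplx ρ) z :=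
      dz_cplx_smul (diffAt_of_mem hV hρ hz) hcd j
    rw [show (fun w => ((c w : ℝ) : ℂ)) = cplx c from rfl] at hdzc
    rw [show dz j (fun w => ((c w : ℝ) : ℂ)) z = dz j (cplx c) z from rfl, hdzc]
  -- sum up
  set c₂ : ℝ := η * ((η - 1) * ρ z ^ (η - 1 - 1)) with hc2
  have hsum : levi (fun w => ρ w ^ η) X X z =
      (c₂ : ℂ) * (dirDeriv X (cplx ρ) z * (starRingEnd ℂ) (dirDeriv X (cplx ρ) z)) +
        ((c z : ℝ) : ℂ) * levi ρ X X z := by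
    have hd : dirDeriv X (cplx ρ) z * (starRingEnd ℂ) (dirDeriv X (cplx ρ) z) =
        ∑ j, ∑ k, (X j * dz j (cplx ρ) z) * (starRingEnd ℂ) (X k * dz k (cplx ρ) z) := by
      unfold dirDeriv
      rw [map_sum, Finset.sum_mul_sum]
    unfold levi
    rw [hd]
    simp only [Finset.mul_sum, ← Finset.sum_add_distrib]
    apply Finset.sum_congr rfl; intro j _
    apply Finset.sum_congr rfl; intro k _
    rw [hA j k, dzbar_conj (diffAt_of_mem hV hρ hz) k]
    simp only [map_mul]
    ring
  rw [hsum, Complex.mul_conj]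
  have hre : ∀ (a : ℝ) (w : ℂ), ((a : ℂ) * w).re = a * w.re := by
    intro a w; simp [Complex.mul_re]
  simp only [Complex.add_re, hre, Complex.ofReal_re]
  have h1 : ρ z ^ (η - 1 - 1) = ρ z ^ (η - 2) := by ring_nf
  have h2 : ρ z ^ (η - 1) = ρ z ^ (η - 2) * ρ z := by
    rw [← Real.rpow_add_one (ne_of_gt hρz)]; ring_nf
  rw [hc2, hc, h1]
  simp only []
  rw [h2]
  ring

lemma mem_closure_of_rho_zero (hV : IsOpen V) (hρ : ContDiffOn ℝ (⊤:ℕ∞) ρ V)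
    {Ω : Set (Fin n → ℂ)} (hΩeq : Ω = {z ∈ V | ρ z < 0}) {z : Fin n → ℂ} (hz : z ∈ V)
    (h0 : ρ z = 0) (hne : fderiv ℝ ρ z ≠ 0) : z ∈ closure Ω := by
  obtain ⟨u, hu⟩ : ∃ u, fderiv ℝ ρ z u ≠ 0 := by
    by_contra h
    push_neg at h
    exact hne (ContinuousLinearMap.ext fun u => h u)
  set v : Fin n → ℂ := (-(fderiv ℝ ρ z u)) • u with hv
  have hD : fderiv ℝ ρ z v < 0 := by
    rw [hv, map_smul, smul_eq_mul]
    have : (0:ℝ) < fderiv ℝ ρ z u * fderiv ℝ ρ z u := mul_self_pos.mpr hu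
    nlinarith
  have hγ : HasDerivAt (fun t : ℝ => z + t • v) v 0 := by
    simpa using ((hasDerivAt_id (0 : ℝ)).smul_const v).const_add z
  have hcurve : HasDerivAt (fun t : ℝ => ρ (z + t • v)) (fderiv ℝ ρ z v) 0 := by
    have h1 : HasFDerivAt ρ (fderiv ℝ ρ z) ((fun t : ℝ => z + t • v) 0) := by
      simpa using (diffAt_of_mem hV hρ hz).hasFDerivAt
    exact h1.comp_hasDerivAt 0 hγ
  rw [hasDerivAt_iff_tendsto_slope] at hcurve
  have hslope : ∀ᶠ t in nhdsWithin (0:ℝ) (Set.Ioi 0),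
      slope (fun t : ℝ => ρ (z + t • v)) 0 t < 0 :=
    (hcurve.eventually_lt_const hD).filter_mono
      (nhdsWithin_mono 0 (fun t ht => ne_of_gt ht))
  have htend : Filter.Tendsto (fun t : ℝ => z + t • v) (nhdsWithin (0:ℝ) (Set.Ioi 0)) (nhds z) := by
    have : Filter.Tendsto (fun t : ℝ => z + t • v) (nhds 0) (nhds z) := by
      have := hγ.continuousAt.tendsto
      simpa using this
    exact this.mono_left nhdsWithin_le_nhds
  have hmemV : ∀ᶠ t in nhdsWithin (0:ℝ) (Set.Ioi 0), z + t • v ∈ V :=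
    htend.eventually (hV.mem_nhds hz)
  have hmemΩ : ∀ᶠ t in nhdsWithin (0:ℝ) (Set.Ioi 0), z + t • v ∈ Ω := by
    filter_upwards [hslope, hmemV, self_mem_nhdsWithin] with t hs hVm (ht : t ∈ Set.Ioi 0)
    rw [hΩeq]
    refine ⟨hVm, ?_⟩
    have : slope (fun t : ℝ => ρ (z + t • v)) 0 t = ρ (z + t • v) / t := by
      rw [slope_def_field]
      simp [h0]
    rw [this] at hs
    have ht' : (0:ℝ) < t := ht.out
    rcases div_neg_iff.mp hs with ⟨_, h2⟩ | ⟨h1, _⟩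
    · linarith
    · exact h1
  exact mem_closure_of_tendsto htend hmemΩ

lemma dirDeriv_real_smul (r : ℝ) (X : Fin n → ℂ) (f : (Fin n → ℂ) → ℂ) (z : Fin n → ℂ) :
    dirDeriv (r • X) f z = (r : ℂ) * dirDeriv X f z := by
  unfold dirDeriv
  rw [Finset.mul_sum]
  apply Finset.sum_congr rfl
  intro j _
  simp [Pi.smul_apply, Complex.real_smul]
  ring

lemma levi_real_smul (r : ℝ) (X : Fin n → ℂ) (z : Fin n → ℂ) :
    levi ρ (r • X) (r • X) z = ((r : ℂ))^2 * levi ρ X X z := by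
  unfold levi
  simp only [Finset.mul_sum]
  apply Finset.sum_congr rfl; intro j _
  apply Finset.sum_congr rfl; intro k _
  simp [Pi.smul_apply, Complex.real_smul, map_mul, Complex.conj_ofReal]
  ring

lemma continuousOn_levi_re (hV : IsOpen V) (hρ : ContDiffOn ℝ (⊤:ℕ∞) ρ V) :
    ContinuousOn (fun q : (Fin n → ℂ) × (Fin n → ℂ) => (levi ρ q.2 q.2 q.1).re)
      (V ×ˢ (Set.univ : Set (Fin n → ℂ))) := by
  apply Complex.continuous_re.comp_continuousOn
  unfold levi
  apply continuousOn_finset_sum; intro j _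
  apply continuousOn_finset_sum; intro k _
  have h1 : ContinuousOn (fun q : (Fin n → ℂ) × (Fin n → ℂ) =>
      dz j (fun w => dzbar k (cplx ρ) w) q.1) (V ×ˢ (Set.univ : Set (Fin n → ℂ))) :=
    (continuousOn_A hV hρ j k).comp continuous_fst.continuousOn (fun q hq => hq.1)
  exact (h1.mul (((continuous_apply j).comp continuous_snd).continuousOn)).mul
    (Complex.continuous_conj.comp ((continuous_apply k).comp continuous_snd)).continuousOn

lemma continuousOn_dirDeriv (hV : IsOpen V) (hρ : ContDiffOn ℝ (⊤:ℕ∞) ρ V) :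
    ContinuousOn (fun q : (Fin n → ℂ) × (Fin n → ℂ) => dirDeriv q.2 (cplx ρ) q.1)
      (V ×ˢ (Set.univ : Set (Fin n → ℂ))) := by
  unfold dirDeriv
  apply continuousOn_finset_sum; intro j _
  exact (((continuous_apply j).comp continuous_snd).continuousOn).mul
    ((continuousOn_dzrho hV hρ j).comp continuous_fst.continuousOn (fun q hq => hq.1))

lemma key_nbhd (hV : IsOpen V) (hρ : ContDiffOn ℝ (⊤:ℕ∞) ρ V) {η₂ : ℝ} (hη : 1 < η₂)
    {p : Fin n → ℂ} (hpV : p ∈ V) (hρp : ρ p = 0) (hgradp : fderiv ℝ ρ p ≠ 0)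
    (hspc : ∀ X : Fin n → ℂ, X ≠ 0 → dirDeriv X (cplx ρ) p = 0 → 0 < (levi ρ X X p).re) :
    ∃ U : Set (Fin n → ℂ), IsOpen U ∧ p ∈ U ∧ U ⊆ V ∧ (∀ z ∈ U, fderiv ℝ ρ z ≠ 0) ∧
      ∀ z ∈ U, 0 < ρ z → ∀ X : Fin n → ℂ, X ≠ 0 →
        0 < (η₂ - 1) * Complex.normSq (dirDeriv X (cplx ρ) z) + ρ z * (levi ρ X X z).re := by
  classical
  set T : (Fin n → ℂ) × (Fin n → ℂ) → ℝ := fun q =>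
    (η₂ - 1) * Complex.normSq (dirDeriv q.2 (cplx ρ) q.1) + ρ q.1 * (levi ρ q.2 q.2 q.1).re
    with hT
  have hTc : ContinuousOn T (V ×ˢ (Set.univ : Set (Fin n → ℂ))) := by
    apply ContinuousOn.add
    · exact continuousOn_const.mul
        (Complex.continuous_normSq.comp_continuousOn (continuousOn_dirDeriv hV hρ))
    · exact ((hρ.continuousOn.comp continuous_fst.continuousOn (fun q hq => hq.1)).mul
        (continuousOn_levi_re hV hρ))
  have hLc : ContinuousOn (fun q : (Fin n → ℂ) × (Fin n → ℂ) => (levi ρ q.2 q.2 q.1).re)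
      (V ×ˢ (Set.univ : Set (Fin n → ℂ))) := continuousOn_levi_re hV hρ
  have hVU : IsOpen (V ×ˢ (Set.univ : Set (Fin n → ℂ))) := hV.prod isOpen_univ
  set G : Set ((Fin n → ℂ) × (Fin n → ℂ)) :=
    (V ×ˢ (Set.univ : Set (Fin n → ℂ)) ∩ T ⁻¹' Set.Ioi 0) ∪
      (V ×ˢ (Set.univ : Set (Fin n → ℂ)) ∩
        (fun q : (Fin n → ℂ) × (Fin n → ℂ) => (levi ρ q.2 q.2 q.1).re) ⁻¹' Set.Ioi 0) with hG
  have hGopen : IsOpen G :=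
    (hTc.isOpen_inter_preimage hVU isOpen_Ioi).union (hLc.isOpen_inter_preimage hVU isOpen_Ioi)
  have hsub : ({p} : Set (Fin n → ℂ)) ×ˢ Metric.sphere (0 : Fin n → ℂ) 1 ⊆ G := by
    rintro ⟨a, X⟩ ⟨ha, hX⟩
    have ha' : a = p := ha
    subst ha'
    have hX' : ‖X‖ = 1 := by simpa [mem_sphere_iff_norm] using hX
    have hXne : X ≠ 0 := by
      intro h
      rw [h] at hX'
      simp at hX'
    by_cases hd : dirDeriv X (cplx ρ) a = 0
    · exact Or.inr ⟨⟨hpV, Set.mem_univ _⟩, hspc X hXne hd⟩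
    · refine Or.inl ⟨⟨hpV, Set.mem_univ _⟩, ?_⟩
      show 0 < T (a, X)
      rw [hT]
      simp only [hρp, zero_mul, add_zero]
      exact mul_pos (by linarith) (Complex.normSq_pos.mpr hd)
  obtain ⟨u, v, hu, hv, hpu, hsv, huv⟩ := generalized_tube_lemma isCompact_singleton
    (isCompact_sphere (0 : Fin n → ℂ) 1) hGopen hsub
  have hFc : ContinuousOn (fderiv ℝ ρ) V := hρ.continuousOn_fderiv_of_isOpen hV (by simp)
  set N : Set (Fin n → ℂ) := V ∩ (fderiv ℝ ρ) ⁻¹' ({0}ᶜ) with hN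
  have hNopen : IsOpen N := hFc.isOpen_inter_preimage hV isOpen_compl_singleton
  refine ⟨u ∩ N, hu.inter hNopen, ⟨hpu rfl, hpV, hgradp⟩, fun z hz => hz.2.1,
    fun z hz => hz.2.2, ?_⟩
  intro z hz hρz X hXne
  have hnX : ‖X‖ ≠ 0 := norm_ne_zero_iff.mpr hXne
  set Y : Fin n → ℂ := ‖X‖⁻¹ • X with hY
  have hYs : Y ∈ Metric.sphere (0 : Fin n → ℂ) 1 := by
    simp only [mem_sphere_iff_norm, sub_zero, hY, norm_smul, norm_inv, norm_norm]
    field_simp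
  have hzG : (z, Y) ∈ G := huv ⟨hz.1, hsv hYs⟩
  have hTY : 0 < T (z, Y) := by
    rcases hzG with ⟨_, h⟩ | ⟨_, h⟩
    · exact h
    · rw [hT]
      have : 0 < ρ z * (levi ρ Y Y z).re := mul_pos hρz h
      have h2 : 0 ≤ (η₂ - 1) * Complex.normSq (dirDeriv Y (cplx ρ) z) :=
        mul_nonneg (by linarith) (Complex.normSq_nonneg _)
      simpa using add_pos_of_nonneg_of_pos h2 this
  -- scaling
  have hscale : T (z, Y) = (‖X‖⁻¹) ^ 2 * T (z, X) := by
    rw [hT]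
    simp only [hY, dirDeriv_real_smul, levi_real_smul, map_mul, Complex.normSq_mul]
    have h1 : Complex.normSq ((‖X‖⁻¹ : ℝ) : ℂ) = (‖X‖⁻¹) ^ 2 := by
      simp [Complex.normSq_ofReal]; ring
    have h2 : ∀ (a : ℝ) (w : ℂ), (((a : ℂ)) ^ 2 * w).re = a ^ 2 * w.re := by
      intro a w
      rw [show ((a : ℂ)) ^ 2 * w = ((a ^ 2 : ℝ) : ℂ) * w by push_cast; ring,
        Complex.re_ofReal_mul]
    rw [h1, h2]
    ring
  have hX2 : (0:ℝ) < (‖X‖⁻¹) ^ 2 := by positivity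
  exact (mul_pos_iff_of_pos_left hX2).mp (hscale ▸ hTY)

/-- Lemma 3.5: for any defining function `ρ` and any `η₂ ∈ (1,∞)`,
`ρ^{η₂}` is strictly plurisubharmonic outside `cl Ω` in a neighborhood of the set `Π` of
strongly pseudoconvex boundary points. -/
theorem lemma_S4 {n : ℕ} (hn : 2 ≤ n) (Ω : Set (Fin n → ℂ))
    (hΩ : IsOpen Ω) (hbd : Bornology.IsBounded Ω) (hpsc : IsPseudoconvex Ω)
    (V : Set (Fin n → ℂ)) (ρ : (Fin n → ℂ) → ℝ) (hdef : IsDefFn Ω V ρ)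
    (η₂ : ℝ) (hη : 1 < η₂) :
    ∃ W : Set (Fin n → ℂ), IsOpen W ∧
      {p ∈ frontier Ω | ∀ X : Fin n → ℂ, X ≠ 0 → dirDeriv X (cplx ρ) p = 0 →
        0 < (levi ρ X X p).re} ⊆ W ∧
      StrictPSHOn (fun z => ρ z ^ η₂) ((closure Ω)ᶜ ∩ W) := by
  obtain ⟨hVopen, hsubV, hρsm, hΩeq, hgrad⟩ := hdef
  have hfr : frontier Ω ⊆ V := fun q hq => hsubV (frontier_subset_closure hq)
  have key : ∀ p ∈ {p ∈ frontier Ω | ∀ X : Fin n → ℂ, X ≠ 0 → dirDeriv X (cplx ρ) p = 0 →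
      0 < (levi ρ X X p).re},
      ∃ U : Set (Fin n → ℂ), IsOpen U ∧ p ∈ U ∧ U ⊆ V ∧ (∀ z ∈ U, fderiv ℝ ρ z ≠ 0) ∧
        ∀ z ∈ U, 0 < ρ z → ∀ X : Fin n → ℂ, X ≠ 0 →
          0 < (η₂ - 1) * Complex.normSq (dirDeriv X (cplx ρ) z) + ρ z * (levi ρ X X z).re := by
    intro p hp
    have hpfr : p ∈ frontier Ω := hp.1
    have hpV : p ∈ V := hfr hpfr
    have hρp : ρ p = 0 := by
      have hcl : p ∈ closure Ω := frontier_subset_closure hpfr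
      have hcont : ContinuousAt ρ p :=
        (hρsm.contDiffAt (hVopen.mem_nhds hpV)).continuousAt
      have h1 : ρ p ≤ 0 := by
        have hnb : (nhdsWithin p Ω).NeBot := mem_closure_iff_nhdsWithin_neBot.mp hcl
        have htd : Filter.Tendsto ρ (nhdsWithin p Ω) (nhds (ρ p)) :=
          hcont.continuousWithinAt.tendsto
        refine le_of_tendsto htd ?_
        filter_upwards [self_mem_nhdsWithin] with x hx
        have hx' : x ∈ {z ∈ V | ρ z < 0} := hΩeq ▸ hx
        exact hx'.2.le
      have h2 : p ∉ Ω := by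
        rw [hΩ.frontier_eq] at hpfr
        exact hpfr.2
      rcases lt_or_eq_of_le h1 with h | h
      · exact absurd (show p ∈ Ω by rw [hΩeq]; exact ⟨hpV, h⟩) h2
      · exact h
    exact key_nbhd hVopen hρsm hη hpV hρp (hgrad p hpfr) (fun X hX hd => hp.2 X hX hd)
  choose! U hUopen hUmem hUV hUgrad hUpos using key
  refine ⟨⋃ p ∈ {p ∈ frontier Ω | ∀ X : Fin n → ℂ, X ≠ 0 → dirDeriv X (cplx ρ) p = 0 →
      0 < (levi ρ X X p).re}, U p,
    isOpen_biUnion (fun p hp => hUopen p hp),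
    fun p hp => Set.mem_biUnion hp (hUmem p hp), ?_⟩
  intro z hz X hX
  obtain ⟨hzc, hzW⟩ := hz
  obtain ⟨p, hpS, hzU⟩ := Set.mem_iUnion₂.mp hzW
  have hzV : z ∈ V := hUV p hpS hzU
  have hρz : 0 < ρ z := by
    rcases lt_trichotomy (ρ z) 0 with h | h | h
    · exact absurd (subset_closure (show z ∈ Ω by rw [hΩeq]; exact ⟨hzV, h⟩)) hzc
    · exact absurd (mem_closure_of_rho_zero hVopen hρsm hΩeq hzV h (hUgrad p hpS z hzU)) hzc
    · exact h
  have hid := levi_rpow hVopen hρsm η₂ hzV hρz X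
  rw [hid]
  exact mul_pos (mul_pos (by linarith) (Real.rpow_pos_of_pos hρz _))
    (hUpos p hpS z hzU hρz X hX)
end
end

section
/- Let β > π/2 and α > 0, and set r₁ := e^{−(β/2 − π/4)} and r₂ := e^{β/2 − π/4}. If there exists a continuously differentiable function s : [r₁, r₂] → ℝ such that −s′(r) + α·s(r)² − s(r)/r + 4α/r² ≤ 0 for all r ∈ [r₁, r₂], then α·(β − π/2) < π/2. -/
noncomputable section

/-- if a C¹ function `s` on `[e^{−(β/2−π/4)}, e^{β/2−π/4}]` satisfies the
differential inequality `−s′ + α s² − s/r + 4α/r² ≤ 0` there, then `α(β − π/2) < π/2`. -/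
theorem riccati_comparison_worm (β α : ℝ) (hβ : Real.pi / 2 < β) (hα : 0 < α)
    (s s' : ℝ → ℝ)
    (hderiv : ∀ r ∈ Set.Icc (Real.exp (-(β / 2 - Real.pi / 4)))
        (Real.exp (β / 2 - Real.pi / 4)),
      HasDerivWithinAt s (s' r)
        (Set.Icc (Real.exp (-(β / 2 - Real.pi / 4))) (Real.exp (β / 2 - Real.pi / 4))) r)
    (hcont : ContinuousOn s' (Set.Icc (Real.exp (-(β / 2 - Real.pi / 4)))
        (Real.exp (β / 2 - Real.pi / 4))))
    (hineq : ∀ r ∈ Set.Icc (Real.exp (-(β / 2 - Real.pi / 4)))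
        (Real.exp (β / 2 - Real.pi / 4)),
      -s' r + α * s r ^ 2 - s r / r + 4 * α / r ^ 2 ≤ 0) :
    α * (β - Real.pi / 2) < Real.pi / 2 := by
  set L : ℝ := β / 2 - Real.pi / 4 with hLdef
  have hL0 : 0 < L := by rw [hLdef]; linarith
  set r₁ : ℝ := Real.exp (-L)
  set r₂ : ℝ := Real.exp L
  set F : ℝ → ℝ := fun t => Real.arctan (Real.exp t * s (Real.exp t) / 2) with hFdef
  have hmaps : ∀ t ∈ Set.Icc (-L) L, Real.exp t ∈ Set.Icc r₁ r₂ := fun t ht =>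
    ⟨Real.exp_le_exp.2 ht.1, Real.exp_le_exp.2 ht.2⟩
  have hcontF : ContinuousOn F (Set.Icc (-L) L) := by
    have hs : ContinuousOn s (Set.Icc r₁ r₂) := fun r hr => (hderiv r hr).continuousWithinAt
    apply Real.continuous_arctan.comp_continuousOn
    apply ContinuousOn.div_const
    exact (Real.continuous_exp.continuousOn).mul (hs.comp Real.continuous_exp.continuousOn hmaps)
  have main : ∀ t ∈ Set.Ioo (-L) L, ∃ d : ℝ, HasDerivAt F d t ∧ 2 * α ≤ d := by
    intro t ht
    have hrmem : Real.exp t ∈ Set.Ioo r₁ r₂ := ⟨Real.exp_lt_exp.2 ht.1, Real.exp_lt_exp.2 ht.2⟩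
    set r : ℝ := Real.exp t with hrdef
    have hr0 : 0 < r := Real.exp_pos t
    have hsd : HasDerivAt s (s' r) r :=
      (hderiv r (Set.mem_Icc_of_Ioo hrmem)).hasDerivAt (Icc_mem_nhds hrmem.1 hrmem.2)
    have hgd : HasDerivAt (fun u => Real.exp u * s (Real.exp u))
        (r * s r + r ^ 2 * s' r) t := by
      have h1 : HasDerivAt (fun u => s (Real.exp u)) (s' r * r) t :=
        hsd.comp t (Real.hasDerivAt_exp t)
      have h2 : HasDerivAt (fun u => Real.exp u * s (Real.exp u)) _ t := (Real.hasDerivAt_exp t).mul h1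
      convert h2 using 1
      ring
    set σ : ℝ := r * s r with hσdef
    set σ' : ℝ := r * s r + r ^ 2 * s' r with hσ'def
    have hFd : HasDerivAt F (1 / (1 + (σ / 2) ^ 2) * (σ' / 2)) t := (hgd.div_const 2).arctan
    refine ⟨_, hFd, ?_⟩
    -- the differential inequality in σ form
    have h := hineq r (Set.mem_Icc_of_Ioo hrmem)
    have hσineq : α * (σ ^ 2 + 4) ≤ σ' := by
      have h3 := mul_le_mul_of_nonneg_left h (le_of_lt (pow_pos hr0 2))
      rw [mul_zero] at h3
      have h4 : r ^ 2 * (-s' r + α * s r ^ 2 - s r / r + 4 * α / r ^ 2)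
          = -(r ^ 2 * s' r) + α * (r * s r) ^ 2 - r * s r + 4 * α := by
        field_simp
      rw [h4] at h3
      show α * ((r * s r) ^ 2 + 4) ≤ r * s r + r ^ 2 * s' r
      nlinarith [h3]
    have hD : (0 : ℝ) < 1 + (σ / 2) ^ 2 := by positivity
    rw [one_div, inv_mul_eq_div, le_div_iff₀ hD]
    nlinarith [hσineq]
  have hdiff : DifferentiableOn ℝ F (interior (Set.Icc (-L) L)) := by
    rw [interior_Icc]
    intro t ht
    obtain ⟨d, hd, _⟩ := main t ht
    exact hd.differentiableAt.differentiableWithinAt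
  have hge : ∀ t ∈ interior (Set.Icc (-L) L), 2 * α ≤ deriv F t := by
    rw [interior_Icc]
    intro t ht
    obtain ⟨d, hd, hdge⟩ := main t ht
    rw [hd.deriv]
    exact hdge
  have hmvt := (convex_Icc (-L) L).mul_sub_le_image_sub_of_le_deriv hcontF hdiff hge
    (-L) (Set.left_mem_Icc.2 (by linarith)) L (Set.right_mem_Icc.2 (by linarith))
    (by linarith)
  have hub : F L < Real.pi / 2 := Real.arctan_lt_pi_div_two _
  have hlb : -(Real.pi / 2) < F (-L) := Real.neg_pi_div_two_lt_arctan _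
  have h2L : β - Real.pi / 2 = 2 * L := by rw [hLdef]; ring
  have e3 : 2 * α * (L - -L) = 4 * (α * L) := by ring
  rw [e3] at hmvt
  have e4 : α * (β - Real.pi / 2) = 2 * (α * L) := by rw [h2L]; ring
  rw [e4]
  clear_value L r₁ r₂ F
  linarith [hmvt, hub, hlb]
end
end
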